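/- Let h > 0. Let U and V be measurable spaces carrying finite measures μ and ν and measurable symmetric functions r_U : U × U → ℝ and r_V : V × V → ℝ. On the disjoint union X = U ⊕ V define the h-concatenation r by r = r_U on U × U, r = r_V on V × V, and r(x,y) = 2h whenever x and y lie in different summands; let κ be the measure on X given by the sum of the pushforwards of μ and ν under the two inclusions. Let n ≥ 1 and let F : Xⁿ → ℝ be a bounded measurable function such that F(x₁,…,xₙ) = 0 whenever r(x_i, x_j) ≥ 2h for some pair i ≠ j. Then ∫_{Xⁿ} F dκ^{⊗n} = ∫_{Uⁿ} F(inl(y₁),…,inl(yₙ)) dμ^{⊗n} + ∫_{Vⁿ} F(inr(z₁),…,inr(zₙ)) dν^{⊗n}. -/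

import Mathlib

open MeasureTheory

/-- The `h`-concatenation of two distance functions on the disjoint union:
original distances within each summand, all cross-distances equal to `2h`. -/
def hConcat {U V : Type*} (h : ℝ) (rU : U → U → ℝ) (rV : V → V → ℝ) :
    U ⊕ V → U ⊕ V → ℝ
  | Sum.inl a, Sum.inl b => rU a b
  | Sum.inr a, Sum.inr b => rV a b
  | _, _ => 2 * h

lemma pi_restrict_aux {ι : Type*} [Fintype ι] {α : ι → Type*}
    [∀ i, MeasurableSpace (α i)] (μ : ∀ i, Measure (α i)) [∀ i, IsFiniteMeasure (μ i)]
    (s : ∀ i, Set (α i)) (hs : ∀ i, MeasurableSet (s i)) :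
    (Measure.pi μ).restrict (Set.pi Set.univ s) =
      Measure.pi (fun i => (μ i).restrict (s i)) := by
  haveI : ∀ i, SigmaFinite ((μ i).restrict (s i)) := fun i => inferInstance
  refine (Measure.pi_eq (μ := fun i => (μ i).restrict (s i)) fun t ht => ?_).symm
  rw [Measure.restrict_apply (MeasurableSet.univ_pi ht), ← Set.pi_inter_distrib,
    Measure.pi_pi]
  simp_rw [Measure.restrict_apply (ht _)]

/-- Additivity of `2h`-truncated polynomials on the `h`-concatenation: if a bounded
measurable integrand on `n`-samples vanishes whenever some pairwise distance is `≥ 2h`,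
then its integral with respect to the `n`-fold product of the concatenated measure is the
sum of the integrals over the two summands, since mixed samples contribute zero. -/
theorem truncated_polynomial_additive_on_concatenation
    {U V : Type*} [MeasurableSpace U] [MeasurableSpace V]
    (μ : Measure U) (ν : Measure V) [IsFiniteMeasure μ] [IsFiniteMeasure ν]
    (rU : U → U → ℝ) (rV : V → V → ℝ)
    (hrUm : Measurable (Function.uncurry rU)) (hrVm : Measurable (Function.uncurry rV))
    (hrUs : ∀ x y, rU x y = rU y x) (hrVs : ∀ x y, rV x y = rV y x)
    (h : ℝ) (hh : 0 < h)
    (n : ℕ) (hn : 1 ≤ n)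
    (F : (Fin n → U ⊕ V) → ℝ)
    (hFm : Measurable F) (hFb : ∃ C : ℝ, ∀ x, |F x| ≤ C)
    (hF0 : ∀ x : Fin n → U ⊕ V,
      (∃ i j : Fin n, i ≠ j ∧ 2 * h ≤ hConcat h rU rV (x i) (x j)) → F x = 0) :
    ∫ x, F x ∂(Measure.pi fun _ : Fin n => (μ.map Sum.inl + ν.map Sum.inr)) =
      (∫ y, F (fun i => Sum.inl (y i)) ∂(Measure.pi fun _ : Fin n => μ)) +
      (∫ z, F (fun i => Sum.inr (z i)) ∂(Measure.pi fun _ : Fin n => ν)) := by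
  set κ : Measure (U ⊕ V) := μ.map Sum.inl + ν.map Sum.inr with hκ
  haveI h1 : IsFiniteMeasure (μ.map (Sum.inl : U → U ⊕ V)) := by
    constructor
    rw [Measure.map_apply measurable_inl MeasurableSet.univ]
    exact measure_lt_top μ _
  haveI h2 : IsFiniteMeasure (ν.map (Sum.inr : V → U ⊕ V)) := by
    constructor
    rw [Measure.map_apply measurable_inr MeasurableSet.univ]
    exact measure_lt_top ν _
  have hκfin : IsFiniteMeasure κ := by rw [hκ]; infer_instance
  set A : Set (Fin n → U ⊕ V) := Set.pi Set.univ (fun _ => Set.range Sum.inl) with hA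
  set B : Set (Fin n → U ⊕ V) := Set.pi Set.univ (fun _ => Set.range Sum.inr) with hB
  have hAm : MeasurableSet A := MeasurableSet.univ_pi fun _ => measurableSet_range_inl
  have hBm : MeasurableSet B := MeasurableSet.univ_pi fun _ => measurableSet_range_inr
  have hAB : Disjoint A B := by
    rw [Set.disjoint_left]
    intro x hxA hxB
    have i0 : Fin n := ⟨0, hn⟩
    have h1 := hxA i0 (Set.mem_univ _)
    have h2 := hxB i0 (Set.mem_univ _)
    obtain ⟨a, ha⟩ := h1
    obtain ⟨b, hb⟩ := h2
    rw [← ha] at hb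
    exact Sum.inr_ne_inl hb
  -- F vanishes outside A ∪ B
  have hFzero : ∀ x ∉ A ∪ B, F x = 0 := by
    intro x hx
    rw [Set.mem_union] at hx
    push_neg at hx
    obtain ⟨hxA, hxB⟩ := hx
    rw [hA, Set.mem_univ_pi] at hxA
    rw [hB, Set.mem_univ_pi] at hxB
    push_neg at hxA hxB
    obtain ⟨i, hi⟩ := hxA
    obtain ⟨j, hj⟩ := hxB
    obtain ⟨a, ha⟩ : ∃ a, x i = Sum.inr a := by
      cases hxi : x i with
      | inl a => exact absurd ⟨a, hxi.symm⟩ hi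
      | inr a => exact ⟨a, rfl⟩
    obtain ⟨b, hb⟩ : ∃ b, x j = Sum.inl b := by
      cases hxj : x j with
      | inl b => exact ⟨b, rfl⟩
      | inr b => exact absurd ⟨b, hxj.symm⟩ hj
    have hij : i ≠ j := by
      intro hEq
      rw [hEq, hb] at ha
      exact Sum.inl_ne_inr ha
    exact hF0 x ⟨i, j, hij, by rw [ha, hb]; exact le_refl _⟩
  haveI := hκfin
  have hInt : Integrable F (Measure.pi fun _ : Fin n => κ) := by
    obtain ⟨C, hC⟩ := hFb
    exact Integrable.mono' (integrable_const C) hFm.aestronglyMeasurable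
      (Filter.Eventually.of_forall fun x => by simpa [Real.norm_eq_abs] using hC x)
  -- restrict to A ∪ B
  have step1 : ∫ x, F x ∂(Measure.pi fun _ : Fin n => κ) =
      (∫ x in A, F x ∂(Measure.pi fun _ : Fin n => κ)) +
      (∫ x in B, F x ∂(Measure.pi fun _ : Fin n => κ)) := by
    rw [← setIntegral_union hAB hBm hInt.integrableOn hInt.integrableOn]
    exact (setIntegral_eq_integral_of_forall_compl_eq_zero hFzero).symm
  -- restrict of κ
  have hκA : κ.restrict (Set.range Sum.inl) = μ.map Sum.inl := by
    rw [hκ, Measure.restrict_add,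
      Measure.restrict_map measurable_inl measurableSet_range_inl,
      Measure.restrict_map measurable_inr measurableSet_range_inl]
    have e1 : Sum.inl ⁻¹' Set.range (Sum.inl : U → U ⊕ V) = Set.univ := by
      ext a; simp
    have e2 : Sum.inr ⁻¹' Set.range (Sum.inl : U → U ⊕ V) = (∅ : Set V) := by
      ext a; simp
    rw [e1, e2, Measure.restrict_univ, Measure.restrict_empty, Measure.map_zero, add_zero]
  have hκB : κ.restrict (Set.range Sum.inr) = ν.map Sum.inr := by
    rw [hκ, Measure.restrict_add,
      Measure.restrict_map measurable_inl measurableSet_range_inr,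
      Measure.restrict_map measurable_inr measurableSet_range_inr]
    have e1 : Sum.inl ⁻¹' Set.range (Sum.inr : V → U ⊕ V) = (∅ : Set U) := by
      ext a; simp
    have e2 : Sum.inr ⁻¹' Set.range (Sum.inr : V → U ⊕ V) = Set.univ := by
      ext a; simp
    rw [e1, e2, Measure.restrict_univ, Measure.restrict_empty, Measure.map_zero, zero_add]
  have hpiA : (Measure.pi fun _ : Fin n => κ).restrict A =
      Measure.pi (fun _ : Fin n => μ.map Sum.inl) := by
    rw [hA, pi_restrict_aux _ _ (fun _ => measurableSet_range_inl)]
    simp_rw [hκA]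
  have hpiB : (Measure.pi fun _ : Fin n => κ).restrict B =
      Measure.pi (fun _ : Fin n => ν.map Sum.inr) := by
    rw [hB, pi_restrict_aux _ _ (fun _ => measurableSet_range_inr)]
    simp_rw [hκB]
  have hmpA : MeasurePreserving (fun (y : Fin n → U) i => Sum.inl (y i))
      (Measure.pi fun _ : Fin n => μ) (Measure.pi fun _ : Fin n => μ.map Sum.inl) :=
    measurePreserving_pi (fun _ : Fin n => μ) (fun _ : Fin n => μ.map (Sum.inl : U → U ⊕ V)) (fun _ => ⟨measurable_inl, rfl⟩)
  have hmpB : MeasurePreserving (fun (z : Fin n → V) i => Sum.inr (z i))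
      (Measure.pi fun _ : Fin n => ν) (Measure.pi fun _ : Fin n => ν.map Sum.inr) :=
    measurePreserving_pi (fun _ : Fin n => ν) (fun _ : Fin n => ν.map (Sum.inr : V → U ⊕ V)) (fun _ => ⟨measurable_inr, rfl⟩)
  have intA : ∫ x in A, F x ∂(Measure.pi fun _ : Fin n => κ) =
      ∫ y, F (fun i => Sum.inl (y i)) ∂(Measure.pi fun _ : Fin n => μ) := by
    rw [show (∫ x in A, F x ∂(Measure.pi fun _ : Fin n => κ)) =
        ∫ x, F x ∂((Measure.pi fun _ : Fin n => κ).restrict A) from rfl,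
      hpiA, ← hmpA.map_eq,
      integral_map hmpA.measurable.aemeasurable hFm.aestronglyMeasurable]
  have intB : ∫ x in B, F x ∂(Measure.pi fun _ : Fin n => κ) =
      ∫ z, F (fun i => Sum.inr (z i)) ∂(Measure.pi fun _ : Fin n => ν) := by
    rw [show (∫ x in B, F x ∂(Measure.pi fun _ : Fin n => κ)) =
        ∫ x, F x ∂((Measure.pi fun _ : Fin n => κ).restrict B) from rfl,
      hpiB, ← hmpB.map_eq,
      integral_map hmpB.measurable.aemeasurable hFm.aestronglyMeasurable]
  rw [step1, intA, intB]
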